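/- Let H be a real Hilbert space, B : H → H a symmetric elliptic linear map with ellipticity constant α₂ > 0, D ⊆ H a finite-dimensional subspace, Q the orthogonal projection onto D and Q^⊥ = id − Q. Let φ ∈ H and let φ̂ ∈ D be a Galerkin solution relative to φ. Suppose C ≥ 0 satisfies ‖Q(B(Q^⊥ x))‖ ≤ C·‖x‖ for all x ∈ H. Then ‖φ − φ̂‖² ≤ (1 + C²/α₂²)·‖Q^⊥ φ‖². -/

import Mathlib

open RealInnerProductSpace

/-- Let `B` be a symmetric elliptic linear map on a real Hilbert space `H`
with ellipticity constant `α₂ > 0`, `D` a finite-dimensional subspace, `Q` the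
orthogonal projection onto `D`. If `φ̂ ∈ D` is a Galerkin solution relative to `φ` and
`‖Q B Q^⊥ x‖ ≤ C ‖x‖` for all `x`, then `‖φ - φ̂‖² ≤ (1 + C²/α₂²) ‖Q^⊥ φ‖²`. -/
theorem galerkin_L2_error_bound {H : Type*} [NormedAddCommGroup H]
    [InnerProductSpace ℝ H] [CompleteSpace H]
    (B : H →ₗ[ℝ] H) (hsym : ∀ x y : H, ⟪B x, y⟫ = ⟪x, B y⟫)
    (α₂ : ℝ) (hα₂ : 0 < α₂) (hell : ∀ x : H, α₂ * ‖x‖ ^ 2 ≤ ⟪x, B x⟫)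
    (D : Submodule ℝ H) [FiniteDimensional ℝ D]
    (φ φhat : H) (hmem : φhat ∈ D)
    (hGal : ∀ ψ ∈ D, ⟪B (φ - φhat), ψ⟫ = 0)
    (C : ℝ) (hC : 0 ≤ C)
    (hCbound : ∀ x : H,
      ‖(D.orthogonalProjectionOnto (B (x - D.orthogonalProjectionOnto x)) : H)‖ ≤ C * ‖x‖) :
    ‖φ - φhat‖ ^ 2 ≤ (1 + C ^ 2 / α₂ ^ 2) * ‖φ - (D.orthogonalProjectionOnto φ : H)‖ ^ 2 := by
  set e : H := φ - φhat with he
  set p : H := (D.orthogonalProjectionOnto e : H) with hp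
  set r : H := e - p with hr
  have hpD : p ∈ D := (D.orthogonalProjectionOnto e).2
  have hrD : r ∈ Dᗮ := Submodule.sub_starProjection_mem_orthogonal e
  -- r equals φ - Q φ
  have hQhat : (D.orthogonalProjectionOnto φhat : H) = φhat :=
    Submodule.starProjection_eq_self_iff.mpr hmem
  have hr' : r = φ - (D.orthogonalProjectionOnto φ : H) := by
    rw [hr, hp, he, map_sub]
    push_cast
    rw [hQhat]
    abel
  -- Q r = 0
  have hQr : (D.orthogonalProjectionOnto r : H) = 0 := by
    rw [Submodule.orthogonalProjectionOnto_eq_zero_iff.mpr hrD]; rfl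
  -- orthogonality split of the norm
  have hsplit : ‖e‖ ^ 2 = ‖p‖ ^ 2 + ‖r‖ ^ 2 := by
    have hor : ⟪p, r⟫ = 0 := hrD p hpD
    have : e = p + r := by rw [hr]; abel
    rw [this, norm_add_sq_real, hor]
    ring
  -- bound on Q B r
  have hQBr : ‖(D.orthogonalProjectionOnto (B r) : H)‖ ≤ C * ‖r‖ := by
    have := hCbound r
    rwa [hQr, sub_zero] at this
  -- key energy estimate
  have hkey : α₂ * ‖p‖ ^ 2 ≤ C * ‖r‖ * ‖p‖ := by
    have hGp : ⟪B e, p⟫ = 0 := hGal p hpD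
    have hBe : B e = B p + B r := by
      rw [show e = p + r from by rw [hr]; abel, map_add]
    have h1 : ⟪B p, p⟫ = -⟪B r, p⟫ := by
      have : ⟪B p, p⟫ + ⟪B r, p⟫ = 0 := by
        rw [← inner_add_left, ← hBe, hGp]
      linarith
    have h2 : ⟪B r, p⟫ = ⟪(D.orthogonalProjectionOnto (B r) : H), p⟫ := by
      have horth : B r - (D.orthogonalProjectionOnto (B r) : H) ∈ Dᗮ :=
        Submodule.sub_starProjection_mem_orthogonal (B r)
      have : ⟪p, B r - (D.orthogonalProjectionOnto (B r) : H)⟫ = 0 := horth p hpD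
      rw [inner_sub_right] at this
      calc ⟪B r, p⟫ = ⟪p, B r⟫ := real_inner_comm _ _
        _ = ⟪p, (D.orthogonalProjectionOnto (B r) : H)⟫ := by linarith
        _ = ⟪(D.orthogonalProjectionOnto (B r) : H), p⟫ := real_inner_comm _ _
    have h3 : ⟪B r, p⟫ ≥ -(C * ‖r‖ * ‖p‖) := by
      have := abs_real_inner_le_norm ((D.orthogonalProjectionOnto (B r) : H)) p
      have hb : |⟪(D.orthogonalProjectionOnto (B r) : H), p⟫| ≤ C * ‖r‖ * ‖p‖ :=
        le_trans this (by
          have := mul_le_mul_of_nonneg_right hQBr (norm_nonneg p)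
          linarith)
      rw [← h2] at hb
      have := neg_abs_le ⟪B r, p⟫
      linarith [abs_le.mp hb]
    calc α₂ * ‖p‖ ^ 2 ≤ ⟪p, B p⟫ := hell p
      _ = ⟪B p, p⟫ := (real_inner_comm _ _)
      _ = -⟪B r, p⟫ := h1
      _ ≤ C * ‖r‖ * ‖p‖ := by linarith
  -- conclude
  have hgoal : α₂ ^ 2 * ‖p‖ ^ 2 ≤ C ^ 2 * ‖r‖ ^ 2 := by
    nlinarith [hkey, norm_nonneg p, norm_nonneg r, sq_nonneg (α₂ * ‖p‖ - C * ‖r‖),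
      mul_le_mul_of_nonneg_left hkey hα₂.le]
  have hps : ‖p‖ ^ 2 ≤ C ^ 2 / α₂ ^ 2 * ‖r‖ ^ 2 := by
    rw [div_mul_eq_mul_div, le_div_iff₀ (by positivity)]
    nlinarith [hgoal]
  rw [← hr']
  show ‖e‖ ^ 2 ≤ _
  rw [hsplit]
  nlinarith [hps]
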